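/- Let a, b ∈ ℝ² be distinct points and let ℓ be a line in ℝ² such that a and b lie in the same closed half-plane bounded by ℓ. Let a′ and b′ be the orthogonal projections of a and b onto ℓ, and set r_a = ‖a − a′‖ and r_b = ‖b − b′‖. Suppose r_a + r_b = ‖a − b‖, so the closed discs B_a of radius r_a centered at a and B_b of radius r_b centered at b touch externally at the unique point u = (r_b · a + r_a · b)/(r_a + r_b). Then the midpoint m of the segment a′b′ satisfies ⟨m − u, b − a⟩ = 0; that is, m lies on the line through u perpendicular to the segment ab (the common internal tangent line of B_a and B_b passes through the midpoint of a′b′). -/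

import Mathlib

open scoped RealInnerProductSpace

/-- Let `a ≠ b` be points of the plane lying in the same closed half-plane bounded by the
line `ℓ = {x : ⟨x − t, n⟩ = 0}` (with normal `n ≠ 0`), let `a'`, `b'` be their orthogonal
projections onto `ℓ` and `r_a = ‖a − a'‖`, `r_b = ‖b − b'‖`. If `r_a + r_b = ‖a − b‖`
(so the discs of radii `r_a`, `r_b` centered at `a`, `b` touch externally at
`u = (r_b a + r_a b)/(r_a + r_b)`), then the midpoint of `a'b'` lies on the line through
`u` perpendicular to `ab`: `⟨midpoint a' b' − u, b − a⟩ = 0`. -/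
theorem internal_tangent_through_midpoint_of_projections
    (a b t n : EuclideanSpace ℝ (Fin 2)) (hn : n ≠ 0) (hab : a ≠ b)
    (ha : 0 ≤ ⟪a - t, n⟫) (hb : 0 ≤ ⟪b - t, n⟫)
    (a' b' : EuclideanSpace ℝ (Fin 2))
    (ha' : a' = a - (⟪a - t, n⟫ / ‖n‖ ^ 2) • n)
    (hb' : b' = b - (⟪b - t, n⟫ / ‖n‖ ^ 2) • n)
    (ra rb : ℝ) (hra : ra = ‖a - a'‖) (hrb : rb = ‖b - b'‖)
    (htouch : ra + rb = ‖a - b‖)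
    (u : EuclideanSpace ℝ (Fin 2)) (hu : u = ((ra + rb)⁻¹ • (rb • a + ra • b))) :
    ⟪midpoint ℝ a' b' - u, b - a⟫ = 0 := by
  set α : ℝ := ⟪a - t, n⟫ / ‖n‖ ^ 2 with hαdef
  set β : ℝ := ⟪b - t, n⟫ / ‖n‖ ^ 2 with hβdef
  have hnpos : (0:ℝ) < ‖n‖ := norm_pos_iff.mpr hn
  have hn2 : ‖n‖ ^ 2 ≠ 0 := by positivity
  have hα0 : 0 ≤ α := div_nonneg ha (by positivity)
  have hβ0 : 0 ≤ β := div_nonneg hb (by positivity)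
  have hraα : ra = α * ‖n‖ := by
    rw [hra, ha', sub_sub_cancel, norm_smul, Real.norm_of_nonneg hα0]
  have hrbβ : rb = β * ‖n‖ := by
    rw [hrb, hb', sub_sub_cancel, norm_smul, Real.norm_of_nonneg hβ0]
  have hsne : ‖a - b‖ ≠ 0 := norm_ne_zero_iff.mpr (sub_ne_zero.mpr hab)
  have hinner_nba : ⟪n, b - a⟫ = (β - α) * ‖n‖ ^ 2 := by
    have h1 : α * ‖n‖ ^ 2 = ⟪a - t, n⟫ := div_mul_cancel₀ _ hn2
    have h2 : β * ‖n‖ ^ 2 = ⟪b - t, n⟫ := div_mul_cancel₀ _ hn2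
    have : ⟪b - a, n⟫ = ⟪b - t, n⟫ - ⟪a - t, n⟫ := by
      simp [inner_sub_left]
    rw [real_inner_comm, this, ← h1, ← h2]; ring
  have key : midpoint ℝ a' b' - u
      = ((ra - rb) / (2 * ‖a - b‖)) • (a - b) - ((α + β) / 2) • n := by
    rw [ha', hb', hu, htouch, midpoint_eq_smul_add, invOf_eq_inv]
    match_scalars <;> field_simp <;> linarith [htouch]
  rw [key, inner_sub_left, real_inner_smul_left, real_inner_smul_left,
    hinner_nba]
  have habba : ⟪a - b, b - a⟫ = -(‖a - b‖ ^ 2) := by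
    rw [show b - a = -(a - b) by abel, inner_neg_right,
      real_inner_self_eq_norm_sq]
  rw [habba]
  have hs : ‖a - b‖ = (α + β) * ‖n‖ := by rw [← htouch, hraα, hrbβ]; ring
  rw [hs, hraα, hrbβ]
  have hABne : (α + β) * ‖n‖ ≠ 0 := by rw [← hs]; exact hsne
  clear_value α β
  field_simp
  ring
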